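/- Let (V,[·,·,·]) be a complex anti-Lie triple system and J a quaternionic automorphism (conjugate-linear, J² = −1, J[x,y,z] = [Jx,Jy,Jz]). Suppose C : ℝ → V is differentiable and satisfies C' = (1/2)[J(C), C, C]. Then in the associated Lie superalgebra L(V) = D(V) ⊕ V, the elements α = (1/2)[C, J(C)] and β = (1/2)[C, C] (superbrackets, taking values in D(V) = span of left multiplications) satisfy α' = (1/2)[J(β), β] and β' = [α, β]. -/

import Mathlib

/-- An anti-Lie triple system: a module with a trilinear product satisfying
symmetry in the first two arguments, the cyclic identity, and the derivation
identity. -/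
structure AntiLieTripleSystem (K V : Type*) [CommRing K]
    [AddCommGroup V] [Module K V] where
  t : V →ₗ[K] V →ₗ[K] V →ₗ[K] V
  symm : ∀ x y z, t x y z = t y x z
  cyclic : ∀ x y z, t x y z + t z x y + t y z x = 0
  leibniz : ∀ u v x y z,
    t u v (t x y z) = t (t u v x) y z + t x (t u v y) z + t x y (t u v z)


section altsAux
variable {V : Type*} [AddCommGroup V] [Module ℂ V]

lemma alts_h1 (T : AntiLieTripleSystem ℂ V) (a b : V) :
    T.t b a a = (-(1/2) : ℂ) • T.t a a b := by
  linear_combination (norm := module)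
    ((1/2 : ℂ)) • T.cyclic a a b - ((1/2 : ℂ)) • T.symm a b a

lemma alts_h2 (T : AntiLieTripleSystem ℂ V) (a b : V) :
    T.t a b b = (-(1/2) : ℂ) • T.t b b a := by
  linear_combination (norm := module)
    ((1/2 : ℂ)) • T.cyclic b b a - ((1/2 : ℂ)) • T.symm b a b

lemma alts_h3 (T : AntiLieTripleSystem ℂ V) (a b w : V) :
    T.t a (T.t b b a) w = - T.t (T.t a a b) b w := by
  linear_combination (norm := module)
    ((-1/2 : ℂ)) • T.leibniz a a b b w + ((-1/2 : ℂ)) • T.leibniz b b a a w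
      + ((-1/2 : ℂ)) • T.symm b (T.t a a b) w
      + ((-1/2 : ℂ)) • T.symm (T.t b b a) a w

lemma alts_L1 (T : AntiLieTripleSystem ℂ V) (a b w : V) :
    T.t a a (T.t b b w) - T.t b b (T.t a a w)
      = (2 : ℂ) • T.t (T.t a a b) b w := by
  linear_combination (norm := module)
    T.leibniz a a b b w + T.symm b (T.t a a b) w

lemma alts_taaa (T : AntiLieTripleSystem ℂ V) (a : V) : T.t a a a = 0 := by
  linear_combination (norm := module) ((1/3 : ℂ)) • T.cyclic a a a

lemma alts_eq1 (T : AntiLieTripleSystem ℂ V) (a b w : V) :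
    (1/2 : ℂ) • (T.t ((1/2 : ℂ) • T.t b a a) b w
        + T.t a ((-(1/2) : ℂ) • T.t a b b) w)
      = (1/2 : ℂ) • ((1/2 : ℂ) • T.t b b ((1/2 : ℂ) • T.t a a w)
          - (1/2 : ℂ) • T.t a a ((1/2 : ℂ) • T.t b b w)) := by
  have h1'' : T.t (T.t b a a) b w = (-(1/2) : ℂ) • T.t (T.t a a b) b w := by
    rw [alts_h1 T a b]; simp
  have h2'' : T.t a (T.t a b b) w = (-(1/2) : ℂ) • T.t a (T.t b b a) w := by
    rw [alts_h2 T a b]; simp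
  have h3 := alts_h3 T a b w
  have L1 := alts_L1 T a b w
  simp only [map_smul, LinearMap.smul_apply]
  linear_combination (norm := module)
    ((1/4 : ℂ)) • h1'' - ((1/4 : ℂ)) • h2'' + ((1/8 : ℂ)) • h3
      + ((1/8 : ℂ)) • L1

lemma alts_eq2 (T : AntiLieTripleSystem ℂ V) (a b w : V) :
    (1/2 : ℂ) • (T.t ((1/2 : ℂ) • T.t b a a) a w
        + T.t a ((1/2 : ℂ) • T.t b a a) w)
      = (1/2 : ℂ) • T.t a b ((1/2 : ℂ) • T.t a a w)
        - (1/2 : ℂ) • T.t a a ((1/2 : ℂ) • T.t a b w) := by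
  have h1a : T.t (T.t b a a) a w = (-(1/2) : ℂ) • T.t (T.t a a b) a w := by
    rw [alts_h1 T a b]; simp
  have h1b : T.t a (T.t b a a) w = (-(1/2) : ℂ) • T.t a (T.t a a b) w := by
    rw [alts_h1 T a b]; simp
  have hsym : T.t a (T.t a a b) w = T.t (T.t a a b) a w := T.symm a _ w
  have h5' : T.t (T.t a a a) b w = 0 := by rw [alts_taaa T a]; simp
  have L3 := T.leibniz a a a b w
  simp only [map_smul, LinearMap.smul_apply]
  linear_combination (norm := module)
    ((1/4 : ℂ)) • h1a + ((1/4 : ℂ)) • h1b + ((1/8 : ℂ)) • hsym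
      + ((1/4 : ℂ)) • L3 + ((1/4 : ℂ)) • h5'

lemma alts_prod {V : Type*} [NormedAddCommGroup V]
    [NormedSpace ℂ V] [FiniteDimensional ℂ V]
    (T : AntiLieTripleSystem ℂ V)
    (w : V) (t : ℝ) (f g : ℝ → V) (f' g' : V)
    (hf : HasDerivAt f f' t) (hg : HasDerivAt g g' t) :
    HasDerivAt (fun s => T.t (f s) (g s) w)
      (T.t f' (g t) w + T.t (f t) g' w) t := by
  let B : V →ₗ[ℝ] V →ₗ[ℝ] V := LinearMap.mk₂ ℝ (fun x y => T.t x y w)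
    (fun x x' y => by simp)
    (fun r x y => by simp only [← Complex.coe_smul, map_smul, LinearMap.smul_apply])
    (fun x y y' => by simp)
    (fun r x y => by simp only [← Complex.coe_smul, map_smul, LinearMap.smul_apply])
  let B2 : V →ₗ[ℝ] (V →L[ℝ] V) :=
    (LinearMap.toContinuousLinearMap.toLinearMap).comp B
  let G : V →L[ℝ] (V →L[ℝ] V) := LinearMap.toContinuousLinearMap B2
  have hG : ∀ x y, G x y = T.t x y w := fun x y => rfl
  have h1 : HasDerivAt (fun s => G (f s)) (G f') t :=
    (G.hasFDerivAt).comp_hasDerivAt t hf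
  have h2 := h1.clm_apply hg
  simpa [hG] using h2

end altsAux

/-- For a complex anti-Lie triple system `(V,[·,·,·])` with a quaternionic
automorphism `J` and a solution `C` of `C' = (1/2)[J(C),C,C]`, the elements
`α = (1/2)[C,J(C)] = (1/2)L(C,J(C))` and `β = (1/2)[C,C] = (1/2)L(C,C)` of the
even part `D(V)` of the associated Lie superalgebra `L(V)` satisfy
`α' = (1/2)[J(β),β]` and `β' = [α,β]`, where `J(L(x,y)) = L(Jx,Jy)`.  The
equations are stated applied to an arbitrary vector `w ∈ V`. -/


theorem alts_flow_alpha_beta (V : Type*) [NormedAddCommGroup V]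
    [NormedSpace ℂ V] [FiniteDimensional ℂ V]
    (T : AntiLieTripleSystem ℂ V) (J : V → V)
    (hJadd : ∀ x y, J (x + y) = J x + J y)
    (hJsmul : ∀ (c : ℂ) (x : V), J (c • x) = (starRingEnd ℂ) c • J x)
    (hJ2 : ∀ x, J (J x) = -x)
    (hJt : ∀ x y z, J (T.t x y z) = T.t (J x) (J y) (J z))
    (C : ℝ → V)
    (hC : ∀ t, HasDerivAt C ((1 / 2 : ℂ) • T.t (J (C t)) (C t) (C t)) t) :
    (∀ (w : V) (t : ℝ), HasDerivAt
      (fun s => (1 / 2 : ℂ) • T.t (C s) (J (C s)) w)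
      ((1 / 2 : ℂ) • ((1 / 2 : ℂ) • T.t (J (C t)) (J (C t))
            ((1 / 2 : ℂ) • T.t (C t) (C t) w)
          - (1 / 2 : ℂ) • T.t (C t) (C t)
            ((1 / 2 : ℂ) • T.t (J (C t)) (J (C t)) w))) t)
    ∧ (∀ (w : V) (t : ℝ), HasDerivAt
      (fun s => (1 / 2 : ℂ) • T.t (C s) (C s) w)
      ((1 / 2 : ℂ) • T.t (C t) (J (C t)) ((1 / 2 : ℂ) • T.t (C t) (C t) w)
        - (1 / 2 : ℂ) • T.t (C t) (C t)
          ((1 / 2 : ℂ) • T.t (C t) (J (C t)) w)) t) := by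
  
  have hJreal : ∀ (r : ℝ) (x : V), J (r • x) = r • J x := by
    intro r x
    rw [← Complex.coe_smul, hJsmul, Complex.conj_ofReal, Complex.coe_smul]
  let Jlin : V →ₗ[ℝ] V :=
    { toFun := J, map_add' := hJadd, map_smul' := hJreal }
  let Jc : V →L[ℝ] V := LinearMap.toContinuousLinearMap Jlin
  have hJcoe : ∀ x, Jc x = J x := fun x => rfl
  have hJC : ∀ t, HasDerivAt (fun s => J (C s))
      (J ((1 / 2 : ℂ) • T.t (J (C t)) (C t) (C t))) t := by
    intro t
    have := (Jc.hasFDerivAt).comp_hasDerivAt t (hC t)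
    simpa [Function.comp_def, hJcoe] using this
  have hJD : ∀ t, J ((1 / 2 : ℂ) • T.t (J (C t)) (C t) (C t))
      = (-(1/2) : ℂ) • T.t (C t) (J (C t)) (J (C t)) := by
    intro t
    rw [hJsmul, hJt, hJ2]
    have hc : (starRingEnd ℂ) (1 / 2 : ℂ) = (1 / 2 : ℂ) := by
      rw [map_div₀, map_one, map_ofNat]
    rw [hc]
    simp [neg_smul]
  constructor
  · intro w t
    have hd := ((alts_prod T w t C (fun s => J (C s)) _ _ (hC t)
      (hJC t)).const_smul ((1 / 2 : ℂ)))
    rw [hJD t] at hd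
    have he := alts_eq1 T (C t) (J (C t)) w
    convert hd using 1
    exacts [rfl, he.symm]
  · intro w t
    have hd := ((alts_prod T w t C C _ _ (hC t) (hC t)).const_smul
      ((1 / 2 : ℂ)))
    have he := alts_eq2 T (C t) (J (C t)) w
    convert hd using 1
    exacts [rfl, he.symm]
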